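/- arXiv:1502.07286 — 3 statements merged into one kernel-verified Lean document; each statement's English description precedes it below -/
import Mathlib

section
/- For every ζ ∈ ℂ with Re ζ > 0 and all x ≠ y in ℝ^d, the gradient of the Laplacian resolvent kernel satisfies |∇_x (ζ-Δ)^(-1)(x,y)| ≤ m_d · (κ_d^(-1)·Re ζ - Δ)^(-1/2)(x,y), where m_d = (π/(2e))^(1/2) d^(d/2) (d-1)^((1-d)/2) and κ_d = d/(d-1). -/
noncomputable section
open Real Set MeasureTheory

/-- The kernel of `(ζ-Δ)^(-γ/2)` on `ℝ^d`:
`(λ-Δ)^(-γ/2)(x,y) = (1/Γ(γ/2)) ∫₀^∞ e^(-ζ t) t^(γ/2-1) (4πt)^(-d/2) e^(-|x-y|²/(4t)) dt`. -/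
def cKer (d : ℕ) (γ : ℝ) (ζ : ℂ) (x y : EuclideanSpace ℝ (Fin d)) : ℂ :=
  (Real.Gamma (γ/2))⁻¹ •
    ∫ t in Ioi (0:ℝ), Complex.exp (-ζ * t) *
      ((t ^ (γ/2 - 1) * (4 * π * t) ^ (-(d:ℝ)/2) *
        Real.exp (-(dist x y) ^ 2 / (4 * t)) : ℝ) : ℂ)

/-- The same kernel for real `λ`, real-valued. -/
def rKer (d : ℕ) (γ : ℝ) (lam : ℝ) (x y : EuclideanSpace ℝ (Fin d)) : ℝ :=
  (Real.Gamma (γ/2))⁻¹ *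
    ∫ t in Ioi (0:ℝ), Real.exp (-lam * t) * t ^ (γ/2 - 1) * (4 * π * t) ^ (-(d:ℝ)/2) *
      Real.exp (-(dist x y) ^ 2 / (4 * t))

/-- The `i`-th component of the gradient `∇ₓ (ζ-Δ)^(-γ/2)(x,y)`, obtained by
differentiating the heat-kernel representation under the integral sign. -/
def gradKer (d : ℕ) (γ : ℝ) (ζ : ℂ) (x y : EuclideanSpace ℝ (Fin d)) (i : Fin d) : ℂ :=
  (Real.Gamma (γ/2))⁻¹ •
    ∫ t in Ioi (0:ℝ), Complex.exp (-ζ * t) *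
      ((t ^ (γ/2 - 1) * (4 * π * t) ^ (-(d:ℝ)/2) * (-(x i - y i)/(2 * t)) *
        Real.exp (-(dist x y) ^ 2 / (4 * t)) : ℝ) : ℂ)

lemma aux_rpow_exp {u : ℝ} (hu : 0 ≤ u) {p : ℝ} (hp : 0 < p) :
    u ^ p * Real.exp (-u) ≤ (p / Real.exp 1) ^ p := by
  have h1 : u ≤ p * Real.exp (u / p - 1) := by
    have h := Real.add_one_le_exp (u / p - 1)
    have : u / p ≤ Real.exp (u / p - 1) := by linarith
    calc u = p * (u / p) := by field_simp
    _ ≤ p * Real.exp (u / p - 1) := by nlinarith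
  have h2 : u ^ p ≤ (p * Real.exp (u / p - 1)) ^ p :=
    Real.rpow_le_rpow hu h1 hp.le
  have h3 : (p * Real.exp (u / p - 1)) ^ p = p ^ p * Real.exp (u - p) := by
    rw [Real.mul_rpow hp.le (Real.exp_pos _).le,
      Real.rpow_def_of_pos (Real.exp_pos _), Real.log_exp]
    congr 1
    field_simp
  have h4 : (p / Real.exp 1) ^ p = p ^ p * Real.exp (-p) := by
    rw [Real.div_rpow hp.le (Real.exp_pos _).le,
      Real.rpow_def_of_pos (Real.exp_pos _), Real.log_exp, one_mul, div_eq_mul_inv,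
      ← Real.exp_neg]
  calc u ^ p * Real.exp (-u) ≤ p ^ p * Real.exp (u - p) * Real.exp (-u) :=
        mul_le_mul_of_nonneg_right (h3 ▸ h2) (Real.exp_pos _).le
    _ = p ^ p * Real.exp (-p) := by
        rw [mul_assoc, ← Real.exp_add]; congr 1; ring
    _ = (p / Real.exp 1) ^ p := h4.symm

lemma aux2 {p a s : ℝ} (hp : 0 < p) (ha : 0 < a) (hs : 0 < s) :
    s ^ (-p) * Real.exp (-(a / s)) ≤ (p / Real.exp 1) ^ p * a ^ (-p) := by
  have hu : 0 < a / s := div_pos ha hs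
  have key := aux_rpow_exp hu.le hp
  have hsp : s ^ (-p) = (a / s) ^ p * a ^ (-p) := by
    rw [Real.div_rpow ha.le hs.le, Real.rpow_neg ha.le, Real.rpow_neg hs.le]
    field_simp
  rw [hsp]
  calc (a / s) ^ p * a ^ (-p) * Real.exp (-(a / s))
      = (a / s) ^ p * Real.exp (-(a / s)) * a ^ (-p) := by ring
    _ ≤ (p / Real.exp 1) ^ p * a ^ (-p) :=
        mul_le_mul_of_nonneg_right key (Real.rpow_nonneg ha.le _)

lemma stepA (d : ℕ) (ζ : ℂ) (x y : EuclideanSpace ℝ (Fin d)) (i : Fin d) :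
    ‖gradKer d 2 ζ x y i‖ ≤ |x i - y i| *
      ∫ t in Ioi (0:ℝ), Real.exp (-ζ.re * t) * ((4 * π * t) ^ (-(d:ℝ)/2) / (2 * t) *
        Real.exp (-(dist x y) ^ 2 / (4 * t))) := by
  have h0 : gradKer d 2 ζ x y i = ∫ t in Ioi (0:ℝ), Complex.exp (-ζ * t) *
      ((((4 * π * t) ^ (-(d:ℝ)/2) * (-(x i - y i)/(2 * t)) *
        Real.exp (-(dist x y) ^ 2 / (4 * t))) : ℝ) : ℂ) := by
    rw [gradKer]
    norm_num
  rw [h0, ← MeasureTheory.integral_const_mul]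
  refine le_trans (norm_integral_le_integral_norm _) (le_of_eq ?_)
  refine setIntegral_congr_fun measurableSet_Ioi fun t ht => ?_
  have ht0 : (0:ℝ) < t := ht
  have hA : (0:ℝ) ≤ (4 * π * t) ^ (-(d:ℝ)/2) := Real.rpow_nonneg (by positivity) _
  have hexp : ‖Complex.exp (-ζ * t)‖ = Real.exp (-ζ.re * t) := by
    rw [Complex.norm_exp]
    congr 1
    simp [Complex.mul_re]
  rw [norm_mul, hexp, Complex.norm_real, Real.norm_eq_abs, abs_mul, abs_mul,
    abs_of_nonneg hA, abs_of_pos (Real.exp_pos _), abs_div, abs_neg,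
    abs_of_pos (by positivity : (0:ℝ) < 2 * t)]
  ring

/-- pointwise bound `|∇ₓ (ζ-Δ)^(-1)(x,y)| ≤ m_d (κ_d⁻¹ Re ζ - Δ)^(-1/2)(x,y)`. -/
theorem stmt2 (d : ℕ) (hd : 2 ≤ d) (md κd : ℝ)
    (hmd : md = Real.sqrt (π / (2 * Real.exp 1)) * (d:ℝ) ^ ((d:ℝ)/2)
        * ((d:ℝ) - 1) ^ (((1:ℝ) - (d:ℝ))/2))
    (hκd : κd = (d:ℝ)/((d:ℝ) - 1))
    (ζ : ℂ) (hζ : 0 < ζ.re) (x y : EuclideanSpace ℝ (Fin d)) (hxy : x ≠ y) :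
    Real.sqrt (∑ i, ‖gradKer d 2 ζ x y i‖ ^ 2) ≤ md * rKer d 1 (ζ.re / κd) x y := by
  have hd1 : (0:ℝ) < (d:ℝ) - 1 := by
    have : (2:ℝ) ≤ (d:ℝ) := by exact_mod_cast hd
    linarith
  have hd0 : (0:ℝ) < (d:ℝ) := by linarith
  have hκpos : 0 < κd := by rw [hκd]; positivity
  have hκ1 : 1 < κd := by
    rw [hκd, lt_div_iff₀ hd1]; linarith
  set lam := ζ.re with hlam
  set r := dist x y with hrdef
  have hr : 0 < r := dist_pos.mpr hxy
  set g : ℝ → ℝ := fun t => Real.exp (-lam * t) * ((4 * π * t) ^ (-(d:ℝ)/2) / (2 * t) *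
      Real.exp (-r ^ 2 / (4 * t))) with hg
  have h1 : ∀ i, ‖gradKer d 2 ζ x y i‖ ≤ |x i - y i| * ∫ t in Ioi (0:ℝ), g t := by
    intro i
    simp only [hg, hrdef, hlam]
    exact stepA d ζ x y i
  have hgnn : ∀ t, t ∈ Ioi (0:ℝ) → 0 ≤ g t := by
    intro t ht
    have ht0 : (0:ℝ) < t := ht
    have hA : (0:ℝ) ≤ (4 * π * t) ^ (-(d:ℝ)/2) := Real.rpow_nonneg (by positivity) _
    simp only [hg]
    positivity
  have hJ0 : 0 ≤ ∫ t in Ioi (0:ℝ), g t := setIntegral_nonneg measurableSet_Ioi hgnn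
  set J := ∫ t in Ioi (0:ℝ), g t with hJdef
  -- Step A
  have hA : Real.sqrt (∑ i, ‖gradKer d 2 ζ x y i‖ ^ 2) ≤ r * J := by
    have h2 : ∑ i, ‖gradKer d 2 ζ x y i‖ ^ 2 ≤ ∑ i, (x i - y i) ^ 2 * J ^ 2 := by
      apply Finset.sum_le_sum
      intro i _
      calc ‖gradKer d 2 ζ x y i‖ ^ 2 ≤ (|x i - y i| * J) ^ 2 :=
            pow_le_pow_left₀ (norm_nonneg _) (h1 i) 2
        _ = (x i - y i) ^ 2 * J ^ 2 := by rw [mul_pow, sq_abs]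
    calc Real.sqrt (∑ i, ‖gradKer d 2 ζ x y i‖ ^ 2)
        ≤ Real.sqrt (∑ i, (x i - y i) ^ 2 * J ^ 2) := Real.sqrt_le_sqrt h2
      _ = Real.sqrt ((∑ i, (x i - y i) ^ 2) * J ^ 2) := by rw [← Finset.sum_mul]
      _ = Real.sqrt (∑ i, (x i - y i) ^ 2) * Real.sqrt (J ^ 2) :=
          Real.sqrt_mul (by positivity) _
      _ = r * J := by
          rw [Real.sqrt_sq hJ0, hrdef, EuclideanSpace.dist_eq]
          congr 2
          refine Finset.sum_congr rfl fun i _ => ?_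
          rw [Real.dist_eq, sq_abs]
  -- Step B
  set ε := κd - 1 with hεdef
  have hε : 0 < ε := by rw [hεdef]; linarith
  have hεval : ε = 1/((d:ℝ)-1) := by
    rw [hεdef, hκd]; field_simp; ring
  set C := md * (Real.sqrt π)⁻¹ with hC
  have key : ∀ u : ℝ, 0 ≤ u → Real.sqrt u * Real.exp (-u) ≤ Real.sqrt ((1:ℝ)/(2*Real.exp 1)) := by
    intro u hu
    have h := aux_rpow_exp hu (by norm_num : (0:ℝ) < 1/2)
    rw [Real.sqrt_eq_rpow, Real.sqrt_eq_rpow]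
    calc u ^ ((1:ℝ)/2) * Real.exp (-u) ≤ ((1/2)/Real.exp 1) ^ ((1:ℝ)/2) := h
      _ = ((1:ℝ)/(2*Real.exp 1)) ^ ((1:ℝ)/2) := by rw [div_div]
  have hconst : κd ^ ((d:ℝ)/2) / Real.sqrt ε * Real.sqrt ((1:ℝ)/(2*Real.exp 1)) = C := by
    have hsπ : Real.sqrt (π/(2*Real.exp 1)) = Real.sqrt π * Real.sqrt ((1:ℝ)/(2*Real.exp 1)) := by
      rw [← Real.sqrt_mul Real.pi_pos.le]
      congr 1
      ring
    have hκr : κd ^ ((d:ℝ)/2) = (d:ℝ) ^ ((d:ℝ)/2) / ((d:ℝ)-1) ^ ((d:ℝ)/2) := by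
      rw [hκd, Real.div_rpow hd0.le hd1.le]
    have hsε : Real.sqrt ε = (((d:ℝ)-1) ^ ((1:ℝ)/2))⁻¹ := by
      rw [hεval, Real.sqrt_eq_rpow, one_div, Real.inv_rpow hd1.le]
    have hpow : ((d:ℝ)-1) ^ (((1:ℝ)-(d:ℝ))/2) = ((d:ℝ)-1) ^ ((1:ℝ)/2) / ((d:ℝ)-1) ^ ((d:ℝ)/2) := by
      rw [← Real.rpow_sub hd1]
      congr 1
      ring
    rw [hC, hmd, hsπ, hκr, hsε, hpow]
    have hπ : Real.sqrt π ≠ 0 := by positivity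
    have hq1 : ((d:ℝ)-1) ^ ((1:ℝ)/2) ≠ 0 := by positivity
    have hq2 : ((d:ℝ)-1) ^ ((d:ℝ)/2) ≠ 0 := by positivity
    field_simp
  have hB : r * J ≤ md * rKer d 1 (lam / κd) x y := by
    have hlam' : 0 < lam / κd := div_pos hζ hκpos
    have hsub : (∫ s in Ioi (0:ℝ), g (κd⁻¹ * s)) = κd * J := by
      rw [hJdef, integral_comp_mul_left_Ioi g 0 (inv_pos.mpr hκpos), mul_zero, inv_inv,
        smul_eq_mul]
    have hJ2 : r * J = ∫ s in Ioi (0:ℝ), r * κd⁻¹ * g (κd⁻¹ * s) := by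
      rw [MeasureTheory.integral_const_mul, hsub]
      field_simp
    have hRKer : md * rKer d 1 (lam / κd) x y = ∫ s in Ioi (0:ℝ),
        C * (Real.exp (-(lam/κd) * s) * s ^ ((1:ℝ)/2 - 1) * (4 * π * s) ^ (-(d:ℝ)/2) *
          Real.exp (-r ^ 2 / (4 * s))) := by
      rw [rKer, MeasureTheory.integral_const_mul, Real.Gamma_one_half_eq, hC]
      ring
    rw [hJ2, hRKer]
    apply integral_mono_of_nonneg
    · filter_upwards [ae_restrict_mem measurableSet_Ioi] with s hs
      have hs0 : (0:ℝ) < s := hs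
      have hgn := hgnn (κd⁻¹ * s) (mem_Ioi.mpr (mul_pos (inv_pos.mpr hκpos) hs0))
      have : (0:ℝ) ≤ r * κd⁻¹ := by positivity
      exact mul_nonneg this hgn
    · -- Integrability of RHS
      apply Integrable.const_mul
      set p : ℝ := ((d:ℝ)+1)/2 with hp
      have hppos : 0 < p := by rw [hp]; positivity
      set a : ℝ := r^2/4 with ha
      have hapos : 0 < a := by rw [ha]; positivity
      set M : ℝ := (4*π) ^ (-(d:ℝ)/2) * ((p / Real.exp 1) ^ p * a ^ (-p)) with hM
      apply Integrable.mono' ((exp_neg_integrableOn_Ioi 0 hlam').const_mul M)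
      · apply ContinuousOn.aestronglyMeasurable _ measurableSet_Ioi
        apply ContinuousOn.mul
        apply ContinuousOn.mul
        apply ContinuousOn.mul
        · exact (Real.continuous_exp.comp (continuous_const.mul continuous_id)).continuousOn
        · exact ContinuousOn.rpow_const continuousOn_id fun s hs => Or.inl (ne_of_gt hs)
        · refine ContinuousOn.rpow_const (continuous_const.mul continuous_id).continuousOn
            fun s hs => Or.inl ?_
          have hs0 : (0:ℝ) < s := hs
          positivity
        · refine Real.continuous_exp.comp_continuousOn (ContinuousOn.div continuousOn_const
            (continuous_const.mul continuous_id).continuousOn fun s hs => ?_)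
          have hs0 : (0:ℝ) < s := hs
          positivity
      · filter_upwards [ae_restrict_mem measurableSet_Ioi] with s hs
        have hs0 : (0:ℝ) < s := hs
        have hA0 : (0:ℝ) ≤ (4*π*s) ^ (-(d:ℝ)/2) := Real.rpow_nonneg (by positivity) _
        have hs12 : (0:ℝ) ≤ s ^ ((1:ℝ)/2-1) := Real.rpow_nonneg hs0.le _
        rw [Real.norm_eq_abs, abs_of_nonneg (by positivity)]
        have e1 : (4*π*s) ^ (-(d:ℝ)/2) = (4*π) ^ (-(d:ℝ)/2) * s ^ (-(d:ℝ)/2) :=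
          Real.mul_rpow (by positivity) hs0.le
        have e2 : s ^ ((1:ℝ)/2-1) * s ^ (-(d:ℝ)/2) = s ^ (-p) := by
          rw [← Real.rpow_add hs0]
          congr 1
          rw [hp]; ring
        have e3 : Real.exp (-r^2/(4*s)) = Real.exp (-(a/s)) := by
          congr 1
          rw [ha]; ring
        calc Real.exp (-(lam/κd) * s) * s ^ ((1:ℝ)/2-1) * (4*π*s) ^ (-(d:ℝ)/2) *
              Real.exp (-r^2/(4*s))
            = (4*π) ^ (-(d:ℝ)/2) * (s ^ (-p) * Real.exp (-(a/s))) * Real.exp (-(lam/κd) * s) := by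
              rw [e1, e3, ← e2]; ring
          _ ≤ (4*π) ^ (-(d:ℝ)/2) * ((p/Real.exp 1) ^ p * a ^ (-p)) * Real.exp (-(lam/κd) * s) := by
              refine mul_le_mul_of_nonneg_right ?_ (Real.exp_pos _).le
              exact mul_le_mul_of_nonneg_left (aux2 hppos hapos hs0)
                (Real.rpow_nonneg (by positivity) _)
          _ = M * Real.exp (-(lam/κd) * s) := by rw [hM]
    · -- pointwise inequality
      filter_upwards [ae_restrict_mem measurableSet_Ioi] with s hs
      have hs0 : (0:ℝ) < s := hs
      set u : ℝ := ε * r^2/(4*s) with hu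
      have hu0 : (0:ℝ) ≤ u := by rw [hu]; positivity
      have hkey := key u hu0
      have hrel : r/(2*s) = Real.sqrt u / (Real.sqrt ε * Real.sqrt s) := by
        rw [show r/(2*s) = Real.sqrt ((r/(2*s))^2) from (Real.sqrt_sq (by positivity)).symm,
          show (r/(2*s))^2 = u / (ε*s) from by rw [hu]; field_simp; ring,
          Real.sqrt_div hu0, Real.sqrt_mul hε.le]
      have e1 : -lam * (κd⁻¹ * s) = -(lam/κd) * s := by
        field_simp
      have e2 : (4*π*(κd⁻¹ * s)) ^ (-(d:ℝ)/2) = κd ^ ((d:ℝ)/2) * (4*π*s) ^ (-(d:ℝ)/2) := by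
        rw [show 4*π*(κd⁻¹*s) = κd⁻¹ * (4*π*s) from by ring,
          Real.mul_rpow (inv_nonneg.mpr hκpos.le) (by positivity),
          Real.inv_rpow hκpos.le, ← Real.rpow_neg hκpos.le]
        congr 1
        ring
      have e3 : Real.exp (-r^2/(4*(κd⁻¹ * s))) = Real.exp (-r^2/(4*s)) * Real.exp (-u) := by
        rw [← Real.exp_add]
        congr 1
        rw [hu, hεdef]
        field_simp
        ring
      have hP : (0:ℝ) ≤ Real.exp (-(lam/κd)*s) * (4*π*s) ^ (-(d:ℝ)/2) * Real.exp (-r^2/(4*s)) := by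
        have : (0:ℝ) ≤ (4*π*s) ^ (-(d:ℝ)/2) := Real.rpow_nonneg (by positivity) _
        positivity
      have lhs_eq : r * κd⁻¹ * g (κd⁻¹ * s) =
          (Real.exp (-(lam/κd)*s) * (4*π*s) ^ (-(d:ℝ)/2) * Real.exp (-r^2/(4*s))) *
            (κd ^ ((d:ℝ)/2) * (r/(2*s)) * Real.exp (-u)) := by
        simp only [hg]
        rw [e1, e2, e3]
        field_simp
      have hs14 : s ^ ((1:ℝ)/2-1) = (Real.sqrt s)⁻¹ := by
        rw [show ((1:ℝ)/2-1) = -((1:ℝ)/2) from by norm_num, Real.rpow_neg hs0.le,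
          Real.sqrt_eq_rpow]
      have rhs_eq : C * (Real.exp (-(lam/κd) * s) * s ^ ((1:ℝ)/2 - 1) * (4*π*s) ^ (-(d:ℝ)/2) *
            Real.exp (-r^2/(4*s))) =
          (Real.exp (-(lam/κd)*s) * (4*π*s) ^ (-(d:ℝ)/2) * Real.exp (-r^2/(4*s))) *
            (C / Real.sqrt s) := by
        rw [hs14]
        field_simp
      rw [lhs_eq, rhs_eq]
      refine mul_le_mul_of_nonneg_left ?_ hP
      rw [← hconst, hrel]
      have hκr0 : (0:ℝ) ≤ κd ^ ((d:ℝ)/2) := Real.rpow_nonneg hκpos.le _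
      have hsε0 : 0 < Real.sqrt ε := Real.sqrt_pos.mpr hε
      have hss0 : 0 < Real.sqrt s := Real.sqrt_pos.mpr hs0
      rw [show κd ^ ((d:ℝ)/2) * (Real.sqrt u/(Real.sqrt ε * Real.sqrt s)) * Real.exp (-u)
          = κd ^ ((d:ℝ)/2) / Real.sqrt ε * (Real.sqrt u * Real.exp (-u)) / Real.sqrt s from by
            field_simp,
        show κd ^ ((d:ℝ)/2) / Real.sqrt ε * Real.sqrt ((1:ℝ)/(2*Real.exp 1)) / Real.sqrt s
          = κd ^ ((d:ℝ)/2) / Real.sqrt ε * Real.sqrt ((1:ℝ)/(2*Real.exp 1)) / Real.sqrt s from rfl]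
      gcongr
  exact hA.trans hB
end
end

section
/- For every ζ ∈ ℂ with Re ζ > 0 and all x ≠ y in ℝ^d, |(ζ-Δ)^(-1/2)(x,y)| ≤ 2^(d/4+1/4)·(2^(-1)·|ζ| - Δ)^(-1/2)(x,y). -/
noncomputable section
open Real Set MeasureTheory

open Filter Topology

namespace Stmt4Aux

lemma se_bound {c : ℝ} (hc : 0 < c) {s : ℝ} (hs : 0 ≤ s) :
    s * Real.exp (-(c * s)) ≤ 1 / c := by
  have h1 : c * s ≤ Real.exp (c * s) := by
    have := Real.add_one_le_exp (c * s); linarith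
  rcases eq_or_lt_of_le hs with h | h
  · rw [← h]; simp; positivity
  · rw [le_div_iff₀ hc, Real.exp_neg]
    calc s * (Real.exp (c*s))⁻¹ * c = (c*s) * (Real.exp (c*s))⁻¹ := by ring
    _ ≤ Real.exp (c*s) * (Real.exp (c*s))⁻¹ := by
        apply mul_le_mul_of_nonneg_right h1 (by positivity)
    _ = 1 := mul_inv_cancel₀ (Real.exp_pos _).ne'

lemma rpow_exp_bound {p b : ℝ} (hp : p ≤ 0) (hb : 0 < b) :
    ∃ C : ℝ, 0 ≤ C ∧ ∀ t ∈ Ioi (0:ℝ), t ^ p * Real.exp (-(b / t)) ≤ C := by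
  obtain ⟨n, hn⟩ := exists_nat_ge (-p)
  refine ⟨max 1 (n.factorial * b ^ (-(n:ℝ))), le_trans zero_le_one (le_max_left _ _),
    fun t ht => ?_⟩
  have ht0 : (0:ℝ) < t := ht
  rcases le_or_gt 1 t with h1 | h1
  · refine le_trans ?_ (le_max_left _ _)
    have h2 : t ^ p ≤ 1 := Real.rpow_le_one_of_one_le_of_nonpos h1 hp
    have h3 : Real.exp (-(b/t)) ≤ 1 := Real.exp_le_one_iff.mpr (neg_nonpos.mpr (by positivity))
    have h4 : (0:ℝ) ≤ t ^ p := (Real.rpow_nonneg ht0.le p)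
    nlinarith
  · refine le_trans ?_ (le_max_right _ _)
    have hbt : (0:ℝ) ≤ b / t := by positivity
    have h2 : (b/t)^n / n.factorial ≤ Real.exp (b/t) := Real.pow_div_factorial_le_exp (b/t) hbt n
    have h3 : Real.exp (-(b/t)) ≤ n.factorial * (t/b)^n := by
      rw [Real.exp_neg, inv_le_comm₀ (Real.exp_pos _) (by positivity)]
      calc ((n.factorial:ℝ) * (t/b)^n)⁻¹ = (b/t)^n / n.factorial := by
            rw [div_pow, div_pow, mul_inv, inv_div]
            field_simp
      _ ≤ Real.exp (b/t) := h2
    calc t ^ p * Real.exp (-(b/t)) ≤ t ^ p * (n.factorial * (t/b)^n) := by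
          apply mul_le_mul_of_nonneg_left h3 (Real.rpow_nonneg ht0.le p)
    _ = n.factorial * b ^ (-(n:ℝ)) * (t ^ p * t ^ (n:ℝ)) := by
          rw [div_pow, div_eq_mul_inv, ← Real.rpow_natCast t n, ← Real.rpow_natCast b n,
            ← Real.rpow_neg hb.le]
          ring
    _ ≤ n.factorial * b ^ (-(n:ℝ)) * 1 := by
          apply mul_le_mul_of_nonneg_left _ (by positivity)
          rw [← Real.rpow_add ht0]
          exact Real.rpow_le_one ht0.le h1.le (by linarith)
    _ = n.factorial * b ^ (-(n:ℝ)) := mul_one _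

lemma master_int {p lam b : ℝ} (hp : p ≤ 0) (hlam : 0 < lam) (hb : 0 < b) :
    IntegrableOn (fun t => Real.exp (-(lam * t)) * (t ^ p * Real.exp (-(b / t))))
      (Ioi (0:ℝ)) := by
  obtain ⟨C, hC0, hC⟩ := rpow_exp_bound hp hb
  have hint : IntegrableOn (fun t => C * Real.exp (-lam * t)) (Ioi (0:ℝ)) :=
    (exp_neg_integrableOn_Ioi 0 hlam).const_mul C
  refine Integrable.mono' hint ?_ ?_
  · apply Measurable.aestronglyMeasurable
    fun_prop
  · rw [ae_restrict_iff' measurableSet_Ioi]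
    filter_upwards with t ht
    have ht0 : (0:ℝ) < t := ht
    have h1 : (0:ℝ) ≤ t ^ p * Real.exp (-(b/t)) := by positivity
    rw [Real.norm_eq_abs, abs_of_nonneg (by positivity)]
    have := hC t ht
    calc Real.exp (-(lam*t)) * (t ^ p * Real.exp (-(b/t)))
        ≤ Real.exp (-(lam*t)) * C := by
          apply mul_le_mul_of_nonneg_left this (Real.exp_pos _).le
    _ = C * Real.exp (-lam * t) := by rw [neg_mul]; ring


def Fz (p b : ℝ) (z : ℂ) : ℂ :=
  ∫ t in Ioi (0:ℝ), Complex.exp (-z * t) * ((t ^ p * Real.exp (-(b / t)) : ℝ) : ℂ)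

def Iw (p b : ℝ) (w : ℂ) : ℂ :=
  ∫ u in Ioi (0:ℝ), Complex.exp (-w * ((u + b / u : ℝ) : ℂ)) * ((u ^ p : ℝ) : ℂ)

lemma Fz_norm_integrand (p b : ℝ) (z : ℂ) {t : ℝ} (ht : 0 < t) :
    ‖Complex.exp (-z * t) * ((t ^ p * Real.exp (-(b / t)) : ℝ) : ℂ)‖
      = Real.exp (-(z.re * t)) * (t ^ p * Real.exp (-(b / t))) := by
  rw [norm_mul, Complex.norm_exp, Complex.norm_real, Real.norm_eq_abs,
    abs_of_nonneg (by positivity)]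
  congr 2
  simp [Complex.mul_re]

lemma Iw_norm_integrand (p b : ℝ) (w : ℂ) (u : ℝ) (hu : 0 < u) (hb : 0 ≤ b) :
    ‖Complex.exp (-w * ((u + b / u : ℝ) : ℂ)) * ((u ^ p : ℝ) : ℂ)‖
      = Real.exp (-(w.re * (u + b / u))) * u ^ p := by
  rw [norm_mul, Complex.norm_exp, Complex.norm_real, Real.norm_eq_abs,
    abs_of_nonneg (Real.rpow_nonneg hu.le p)]
  congr 2
  simp [Complex.mul_re]

lemma Fz_integrable {p b : ℝ} (hp : p ≤ 0) (hb : 0 < b) {z : ℂ} (hz : 0 < z.re) :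
    IntegrableOn (fun (t:ℝ) => Complex.exp (-z * t) * ((t ^ p * Real.exp (-(b / t)) : ℝ) : ℂ))
      (Ioi (0:ℝ)) := by
  refine Integrable.mono' (master_int hp hz hb) ?_ ?_
  · apply Measurable.aestronglyMeasurable; fun_prop
  · rw [ae_restrict_iff' measurableSet_Ioi]
    filter_upwards with t ht
    exact le_of_eq (Fz_norm_integrand p b z ht)

lemma Iw_integrable {p b : ℝ} (hp : p ≤ 0) (hb : 0 < b) {w : ℂ} (hw : 0 < w.re) :
    IntegrableOn (fun (u:ℝ) => Complex.exp (-w * ((u + b / u : ℝ) : ℂ)) * ((u ^ p : ℝ) : ℂ))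
      (Ioi (0:ℝ)) := by
  have h : IntegrableOn
      (fun u => Real.exp (-(w.re * u)) * (u ^ p * Real.exp (-((w.re * b) / u))))
      (Ioi (0:ℝ)) := master_int hp hw (by positivity)
  refine Integrable.mono' h ?_ ?_
  · apply Measurable.aestronglyMeasurable; fun_prop
  · rw [ae_restrict_iff' measurableSet_Ioi]
    filter_upwards with u hu
    rw [Iw_norm_integrand p b w u hu hb.le]
    have hu0 : (0:ℝ) < u := hu
    have : -(w.re * (u + b / u)) = -(w.re * u) + -((w.re * b) / u) := by
      field_simp; ring
    rw [this, Real.exp_add]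
    exact le_of_eq (by ring)

lemma Fz_diff {p b : ℝ} (hp : p ≤ 0) (hb : 0 < b) :
    DifferentiableOn ℂ (Fz p b) {z : ℂ | 0 < z.re} := by
  intro z₀ hz₀
  have hz₀' : 0 < z₀.re := hz₀
  set δ : ℝ := z₀.re / 2 with hδ
  have hδ0 : 0 < δ := by positivity
  have key := hasDerivAt_integral_of_dominated_loc_of_deriv_le
    (F := fun (z : ℂ) (t : ℝ) =>
      Complex.exp (-z * t) * ((t ^ p * Real.exp (-(b / t)) : ℝ) : ℂ))
    (F' := fun (z : ℂ) (t : ℝ) =>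
      Complex.exp (-z * t) * (-1 * (t:ℂ)) * ((t ^ p * Real.exp (-(b / t)) : ℝ) : ℂ))
    (x₀ := z₀) (s := Metric.ball z₀ δ) (μ := volume.restrict (Ioi 0))
    (bound := fun t => (2/δ) * (Real.exp (-(δ/2 * t)) * (t ^ p * Real.exp (-(b / t)))))
    (Metric.ball_mem_nhds z₀ hδ0) ?_ ?_ ?_ ?_ ?_ ?_
  · exact key.2.differentiableAt.differentiableWithinAt
  · filter_upwards with z
    apply Measurable.aestronglyMeasurable; fun_prop
  · exact Fz_integrable hp hb hz₀'
  · apply Measurable.aestronglyMeasurable; fun_prop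
  · rw [ae_restrict_iff' measurableSet_Ioi]
    filter_upwards with t ht z hz
    have ht0 : (0:ℝ) < t := ht
    have hzre : δ ≤ z.re := by
      have h1 : |z.re - z₀.re| ≤ ‖z - z₀‖ := by
        simpa using Complex.abs_re_le_norm (z - z₀)
      have h2 : ‖z - z₀‖ < δ := by
        simpa [Metric.mem_ball, Complex.dist_eq] using hz
      have := abs_lt.mp (lt_of_le_of_lt h1 h2)
      simp only [hδ] at *; linarith
    rw [norm_mul, norm_mul, Complex.norm_exp, Complex.norm_real, Real.norm_eq_abs,
      abs_of_nonneg (by positivity : (0:ℝ) ≤ t ^ p * Real.exp (-(b/t)))]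
    have habs : ‖-1 * (t:ℂ)‖ = t := by
      simp [abs_of_nonneg ht0.le]
    rw [habs]
    have hre : (-z * (t:ℂ)).re = -(z.re * t) := by simp [Complex.mul_re]
    rw [hre]
    calc Real.exp (-(z.re * t)) * t * (t ^ p * Real.exp (-(b/t)))
        ≤ Real.exp (-(δ * t)) * t * (t ^ p * Real.exp (-(b/t))) := by
          apply mul_le_mul_of_nonneg_right _ (by positivity)
          apply mul_le_mul_of_nonneg_right _ ht0.le
          exact Real.exp_le_exp.mpr (by nlinarith)
    _ = (t * Real.exp (-(δ/2 * t))) * (Real.exp (-(δ/2 * t)) * (t ^ p * Real.exp (-(b/t)))) := by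
          have hsplit : Real.exp (-(δ * t)) = Real.exp (-(δ/2 * t)) * Real.exp (-(δ/2 * t)) := by
            rw [← Real.exp_add]; ring_nf
          rw [hsplit]; ring
    _ ≤ (2/δ) * (Real.exp (-(δ/2 * t)) * (t ^ p * Real.exp (-(b/t)))) := by
          apply mul_le_mul_of_nonneg_right _ (by positivity)
          have := se_bound (by positivity : (0:ℝ) < δ/2) ht0.le
          calc t * Real.exp (-(δ/2 * t)) ≤ 1 / (δ/2) := by
                simpa using this
          _ = 2/δ := by field_simp
  · exact ((master_int hp (by positivity : (0:ℝ) < δ/2) hb).const_mul _)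
  · filter_upwards with t z hz
    have h1 : HasDerivAt (fun z : ℂ => -z * t) (-1 * t) z :=
      (hasDerivAt_id z).neg.mul_const _
    have h2 := (h1.cexp).mul_const ((t ^ p * Real.exp (-(b / t)) : ℝ) : ℂ)
    exact h2


lemma Iw_diff {p b : ℝ} (hp : p ≤ 0) (hb : 0 < b) :
    DifferentiableOn ℂ (Iw p b) {w : ℂ | 0 < w.re} := by
  intro w₀ hw₀
  have hw₀' : 0 < w₀.re := hw₀
  set δ : ℝ := w₀.re / 2 with hδ
  have hδ0 : 0 < δ := by positivity
  have key := hasDerivAt_integral_of_dominated_loc_of_deriv_le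
    (F := fun (w : ℂ) (u : ℝ) =>
      Complex.exp (-w * ((u + b / u : ℝ) : ℂ)) * ((u ^ p : ℝ) : ℂ))
    (F' := fun (w : ℂ) (u : ℝ) =>
      Complex.exp (-w * ((u + b / u : ℝ) : ℂ)) * (-1 * ((u + b / u : ℝ) : ℂ)) * ((u ^ p : ℝ) : ℂ))
    (x₀ := w₀) (s := Metric.ball w₀ δ) (μ := volume.restrict (Ioi 0))
    (bound := fun u => (2/δ) * (Real.exp (-(δ/2 * u)) * (u ^ p * Real.exp (-((δ*b/2) / u)))))
    (Metric.ball_mem_nhds w₀ hδ0) ?_ ?_ ?_ ?_ ?_ ?_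
  · exact key.2.differentiableAt.differentiableWithinAt
  · filter_upwards with w
    apply Measurable.aestronglyMeasurable; fun_prop
  · exact Iw_integrable hp hb hw₀'
  · apply Measurable.aestronglyMeasurable; fun_prop
  · rw [ae_restrict_iff' measurableSet_Ioi]
    filter_upwards with u hu w hw
    have hu0 : (0:ℝ) < u := hu
    have hφ : (0:ℝ) < u + b / u := by positivity
    have hwre : δ ≤ w.re := by
      have h1 : |w.re - w₀.re| ≤ ‖w - w₀‖ := by
        simpa using Complex.abs_re_le_norm (w - w₀)
      have h2 : ‖w - w₀‖ < δ := by
        simpa [Metric.mem_ball, Complex.dist_eq] using hw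
      have := abs_lt.mp (lt_of_le_of_lt h1 h2)
      simp only [hδ] at *; linarith
    rw [norm_mul, norm_mul, Complex.norm_exp, Complex.norm_real, Real.norm_eq_abs,
      abs_of_nonneg (Real.rpow_nonneg hu0.le p)]
    have habs : ‖-1 * ((u + b / u : ℝ) : ℂ)‖ = u + b / u := by
      rw [neg_one_mul, ← Complex.ofReal_neg, Complex.norm_real, Real.norm_eq_abs, abs_neg, abs_of_nonneg hφ.le]
    rw [habs]
    have hre : (-w * ((u + b / u : ℝ) : ℂ)).re = -(w.re * (u + b / u)) := by
      simp [Complex.mul_re]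
    rw [hre]
    have hsplit : ∀ c : ℝ, -(c * (u + b / u)) = -(c * u) + -((c * b) / u) := by
      intro c; field_simp; ring
    calc Real.exp (-(w.re * (u + b/u))) * (u + b/u) * u ^ p
        ≤ Real.exp (-(δ * (u + b/u))) * (u + b/u) * u ^ p := by
          apply mul_le_mul_of_nonneg_right _ (Real.rpow_nonneg hu0.le p)
          apply mul_le_mul_of_nonneg_right _ hφ.le
          exact Real.exp_le_exp.mpr (by nlinarith)
    _ = ((u + b/u) * Real.exp (-(δ/2 * (u + b/u)))) * (Real.exp (-(δ/2 * (u + b/u))) * u ^ p) := by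
          have h3 : Real.exp (-(δ * (u + b/u)))
              = Real.exp (-(δ/2 * (u + b/u))) * Real.exp (-(δ/2 * (u + b/u))) := by
            rw [← Real.exp_add]; ring_nf
          rw [h3]; ring
    _ ≤ (2/δ) * (Real.exp (-(δ/2 * (u + b/u))) * u ^ p) := by
          apply mul_le_mul_of_nonneg_right _ (by positivity)
          have := se_bound (by positivity : (0:ℝ) < δ/2) hφ.le
          calc (u + b/u) * Real.exp (-(δ/2 * (u + b/u))) ≤ 1 / (δ/2) := this
          _ = 2/δ := by field_simp
    _ = (2/δ) * (Real.exp (-(δ/2 * u)) * (u ^ p * Real.exp (-((δ*b/2) / u)))) := by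
          rw [hsplit (δ/2), Real.exp_add]
          have : (δ/2) * b = δ*b/2 := by ring
          rw [this]; ring
  · exact ((master_int hp (by positivity : (0:ℝ) < δ/2) (by positivity : (0:ℝ) < δ*b/2)).const_mul _)
  · filter_upwards with u w hw
    have h1 : HasDerivAt (fun w : ℂ => -w * ((u + b / u : ℝ) : ℂ)) (-1 * ((u + b / u : ℝ) : ℂ)) w :=
      (hasDerivAt_id w).neg.mul_const _
    exact (h1.cexp).mul_const _


lemma key_real {p b : ℝ} (hb : 0 < b) {c : ℝ} (hc : 0 < c) :
    Fz p b ((c:ℂ)^2) * ((c:ℂ)) ^ ((p:ℂ)+1) = Iw p b (c:ℂ) := by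
  have hc0 : c ≠ 0 := hc.ne'
  have hsub := integral_comp_mul_left_Ioi
    (fun u : ℝ => Complex.exp (-(c:ℂ) * ((u + b / u : ℝ) : ℂ)) * ((u ^ p : ℝ) : ℂ)) 0 hc
  rw [mul_zero] at hsub
  have hcongr : ∀ x ∈ Ioi (0:ℝ),
      Complex.exp (-(c:ℂ) * ((c * x + b / (c * x) : ℝ) : ℂ)) * (((c * x) ^ p : ℝ) : ℂ)
      = ((c ^ p : ℝ) : ℂ) *
        (Complex.exp (-((c:ℂ)^2) * x) * ((x ^ p * Real.exp (-(b / x)) : ℝ) : ℂ)) := by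
    intro x hx
    have hx0 : (0:ℝ) < x := hx
    have hcc : (c:ℂ) ≠ 0 := by exact_mod_cast hc0
    have hxc : (x:ℂ) ≠ 0 := by exact_mod_cast hx0.ne'
    have hexp : -(c:ℂ) * ((c * x + b / (c * x) : ℝ) : ℂ)
        = -((c:ℂ)^2) * (x:ℂ) + ((-(b / x) : ℝ) : ℂ) := by
      push_cast
      field_simp
      ring
    rw [hexp, Complex.exp_add, ← Complex.ofReal_exp,
      Real.mul_rpow hc.le hx0.le]
    push_cast
    ring
  have h1 : (∫ x in Ioi (0:ℝ),
      Complex.exp (-(c:ℂ) * ((c * x + b / (c * x) : ℝ) : ℂ)) * (((c * x) ^ p : ℝ) : ℂ))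
      = ((c ^ p : ℝ) : ℂ) * Fz p b ((c:ℂ)^2) := by
    rw [setIntegral_congr_fun measurableSet_Ioi hcongr, Fz]
    exact integral_const_mul _ _
  beta_reduce at hsub
  have h2 : Iw p b (c:ℂ) = c • (((c ^ p : ℝ) : ℂ) * Fz p b ((c:ℂ)^2)) := by
    rw [Iw, ← h1, hsub, smul_smul, mul_inv_cancel₀ hc0, one_smul]
  rw [h2]
  have h3 : ((c:ℂ)) ^ ((p:ℂ)+1) = ((c ^ (p+1) : ℝ) : ℂ) := by
    rw [Complex.ofReal_cpow hc.le]
    push_cast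
    ring_nf
  rw [h3, Real.rpow_add hc, Real.rpow_one, Complex.real_smul]
  push_cast
  ring

lemma key_eq {p b : ℝ} (hp : p ≤ 0) (hb : 0 < b) {w : ℂ} (hw : 0 < w.re)
    (hw2 : 0 < (w^2).re) :
    Fz p b (w^2) * w ^ ((p:ℂ)+1) = Iw p b w := by
  set S : Set ℂ := {v : ℂ | 0 < v.re ∧ 0 < (v^2).re} with hSdef
  have hS : IsOpen S := by
    apply IsOpen.inter
    · exact isOpen_lt continuous_const Complex.continuous_re
    · exact isOpen_lt continuous_const (Complex.continuous_re.comp (continuous_pow 2))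
  have hsq : ∀ v : ℂ, (v^2).re = v.re*v.re - v.im*v.im := by
    intro v; rw [sq]; simp [Complex.mul_re]
  have hconv : Convex ℝ S := by
    have heq : S = {v : ℂ | v.im - v.re < 0} ∩ {v : ℂ | -v.re - v.im < 0} := by
      ext v
      simp only [hSdef, mem_setOf_eq, mem_inter_iff, hsq v]
      constructor
      · rintro ⟨h1, h2⟩; constructor <;> nlinarith
      · rintro ⟨h1, h2⟩; constructor <;> nlinarith
    rw [heq]
    apply Convex.inter
    · exact convex_halfSpace_lt ⟨fun a b => by simp; ring, fun r a => by
        simp [Complex.smul_re, Complex.smul_im]; ring⟩ 0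
    · exact convex_halfSpace_lt ⟨fun a b => by simp; ring, fun r a => by
        simp [Complex.smul_re, Complex.smul_im]; ring⟩ 0
  have hf : AnalyticOnNhd ℂ (fun v => Fz p b (v^2) * v ^ ((p:ℂ)+1)) S := by
    apply DifferentiableOn.analyticOnNhd _ hS
    apply DifferentiableOn.mul
    · exact (Fz_diff hp hb).comp ((differentiable_pow 2).differentiableOn)
        (fun v hv => hv.2)
    · intro v hv
      exact (differentiableAt_id.cpow (differentiableAt_const _)
        (Or.inl hv.1)).differentiableWithinAt
  have hg : AnalyticOnNhd ℂ (Iw p b) S := by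
    apply DifferentiableOn.analyticOnNhd _ hS
    exact (Iw_diff hp hb).mono (fun v hv => hv.1)
  have h1S : (1:ℂ) ∈ S := by
    constructor <;> norm_num
  have htend : Tendsto (fun n : ℕ => ((1 + (1/((n:ℝ)+1)) : ℝ) : ℂ)) atTop (𝓝[≠] (1:ℂ)) := by
    rw [tendsto_nhdsWithin_iff]
    constructor
    · have hr : Tendsto (fun n : ℕ => (1 + (1/((n:ℝ)+1)) : ℝ)) atTop (𝓝 1) := by
        have := tendsto_one_div_add_atTop_nhds_zero_nat (𝕜 := ℝ)
        have h := tendsto_const_nhds.add this (f := fun _ : ℕ => (1:ℝ))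
        simpa using h
      have h2 := (Complex.continuous_ofReal.tendsto 1).comp hr
      simpa [Function.comp_def] using h2
    · filter_upwards with n
      simp only [mem_compl_iff, mem_singleton_iff]
      intro hcontra
      have : (1 + (1/((n:ℝ)+1)) : ℝ) = 1 := by exact_mod_cast hcontra
      have hpos : 0 < 1/((n:ℝ)+1) := by positivity
      linarith
  have hfreq : ∃ᶠ v in 𝓝[≠] (1:ℂ), Fz p b (v^2) * v ^ ((p:ℂ)+1) = Iw p b v := by
    apply htend.frequently
    apply Frequently.of_forall
    intro n
    exact key_real hb (by positivity)
  have := hf.eqOn_of_preconnected_of_frequently_eq hg hconv.isPreconnected h1S hfreq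
  exact this ⟨hw, hw2⟩


end Stmt4Aux

open Stmt4Aux

/-- `|(ζ-Δ)^(-1/2)(x,y)| ≤ 2^(d/4+1/4) (2⁻¹|ζ| - Δ)^(-1/2)(x,y)` for `Re ζ > 0`. -/
theorem stmt4 (d : ℕ) (hd : 2 ≤ d)
    (ζ : ℂ) (hζ : 0 < ζ.re) (x y : EuclideanSpace ℝ (Fin d)) (hxy : x ≠ y) :
    ‖cKer d 1 ζ x y‖ ≤ 2 ^ ((d:ℝ)/4 + 1/4) * rKer d 1 (‖ζ‖ / 2) x y := by
  -- setup
  set r : ℝ := dist x y with hrdef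
  have hr : 0 < r := dist_pos.mpr hxy
  set b : ℝ := r^2/4 with hbdef
  have hb : 0 < b := by positivity
  set p : ℝ := -((d:ℝ)+1)/2 with hpdef
  have hp : p ≤ 0 := by
    rw [hpdef]
    have : (0:ℝ) ≤ (d:ℝ) := Nat.cast_nonneg d
    linarith
  set m : ℝ := ‖ζ‖ with hmdef
  have hζne : ζ ≠ 0 := fun h => by simp [h] at hζ
  have hm : 0 < m := by rw [hmdef]; exact (norm_pos_iff.mpr hζne)
  have hram : ζ.re ≤ m := Complex.re_le_norm ζ
  have hsum : 0 < m + ζ.re := by linarith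
  -- the principal square root of ζ
  set x0 : ℝ := Real.sqrt ((m + ζ.re)/2) with hx0def
  set y0 : ℝ := ζ.im / Real.sqrt (2*(m + ζ.re)) with hy0def
  set w : ℂ := ⟨x0, y0⟩ with hwdef
  have hx0 : 0 < x0 := Real.sqrt_pos.mpr (by positivity)
  have hwre : 0 < w.re := hx0
  have him2 : ζ.im^2 = m^2 - ζ.re^2 := by
    have := Complex.sq_norm ζ
    rw [Complex.normSq_apply] at this
    rw [hmdef] ; nlinarith [this]
  have hsqrt2 : Real.sqrt (2*(m+ζ.re)) = 2 * x0 := by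
    rw [hx0def, show 2*(m+ζ.re) = 2^2*((m+ζ.re)/2) by ring,
      Real.sqrt_mul (by positivity), Real.sqrt_sq (by norm_num)]
  have hx0sq : x0^2 = (m+ζ.re)/2 := Real.sq_sqrt (by positivity)
  have hdiv : (m^2 - ζ.re^2)/(4*((m+ζ.re)/2)) = (m - ζ.re)/2 := by
    rw [show 4*((m+ζ.re)/2) = (m+ζ.re)*2 by ring,
      show m^2 - ζ.re^2 = (m+ζ.re)*(m-ζ.re) by ring]
    rw [mul_div_mul_left _ _ hsum.ne']
  have hwre0 : w.re = x0 := rfl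
  have hwim0 : w.im = y0 := rfl
  have hw2 : w^2 = ζ := by
    apply Complex.ext
    · rw [sq, Complex.mul_re, hwre0, hwim0]
      rw [hy0def, hsqrt2]
      have : ζ.im / (2*x0) * (ζ.im / (2*x0)) = ζ.im^2/(4*x0^2) := by
        field_simp; ring
      rw [this, him2, hx0sq, hdiv]
      linarith
    · rw [sq, Complex.mul_im, hwre0, hwim0]
      rw [hy0def, hsqrt2]
      field_simp
      ring
  have hw2re : 0 < (w^2).re := by rw [hw2]; exact hζ
  have hwne : w ≠ 0 := by
    intro h
    rw [h] at hwre
    simp at hwre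
  have hnsq : Complex.normSq w = m := by
    rw [Complex.normSq_apply, hwre0, hwim0]
    rw [hy0def, hsqrt2]
    have : ζ.im / (2*x0) * (ζ.im / (2*x0)) = ζ.im^2/(4*x0^2) := by field_simp; ring
    rw [this, him2, hx0sq, hdiv]
    linarith
  set ρ : ℝ := Real.sqrt m with hρdef
  have hρ : 0 < ρ := Real.sqrt_pos.mpr hm
  have habsw : ‖w‖ = ρ := by rw [Complex.norm_def, hnsq]
  set α : ℝ := Real.sqrt (m/2) with hαdef
  have hα : 0 < α := Real.sqrt_pos.mpr (by positivity)
  have hαsq : α^2 = m/2 := Real.sq_sqrt (by positivity)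
  have hαle : α ≤ w.re := by
    show α ≤ x0
    exact Real.sqrt_le_sqrt (by linarith)
  clear_value x0 y0 w
  clear_value m ρ α
  -- the key identity and bounds
  have hkey : Fz p b ζ * w ^ ((p:ℂ)+1) = Iw p b w := by
    have := key_eq hp hb hwre hw2re
    rwa [hw2] at this
  have hnormw : ‖w ^ ((p:ℂ)+1)‖ = ρ ^ (p+1) := by
    rw [Complex.norm_cpow_of_ne_zero hwne]
    have h1 : ((p:ℂ)+1).re = p+1 := by simp
    have h2 : ((p:ℂ)+1).im = 0 := by simp
    rw [h1, h2, mul_zero, Real.exp_zero, div_one, habsw]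
  set R : ℝ := ∫ t in Ioi (0:ℝ), Real.exp (-(m/2 * t)) * (t^p * Real.exp (-(b/t))) with hRdef
  have hR0 : 0 ≤ R := by
    rw [hRdef]
    apply setIntegral_nonneg measurableSet_Ioi
    intro t ht
    have ht0 : (0:ℝ) < t := ht
    positivity
  set J : ℝ := ∫ u in Ioi (0:ℝ), Real.exp (-(α * (u + b/u))) * u^p with hJdef
  have hJint : IntegrableOn (fun u => Real.exp (-(α * (u + b/u))) * u^p) (Ioi (0:ℝ)) := by
    apply (master_int hp hα (show (0:ℝ) < α*b by positivity)).congr_fun _ measurableSet_Ioi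
    intro u hu
    have hu0 : (0:ℝ) < u := hu
    show Real.exp (-(α*u)) * (u^p * Real.exp (-((α*b)/u)))
        = Real.exp (-(α*(u+b/u))) * u^p
    have h9 : -(α * (u + b/u)) = -(α*u) + -((α*b)/u) := by field_simp; ring
    rw [h9, Real.exp_add]
    ring
  have hIwle : ‖Iw p b w‖ ≤ J := by
    calc ‖Iw p b w‖ ≤ ∫ u in Ioi (0:ℝ),
        ‖Complex.exp (-w * ((u + b / u : ℝ) : ℂ)) * ((u ^ p : ℝ) : ℂ)‖ :=
          norm_integral_le_integral_norm _
    _ = ∫ u in Ioi (0:ℝ), Real.exp (-(w.re * (u + b/u))) * u^p := by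
        apply setIntegral_congr_fun measurableSet_Ioi
        intro u hu
        exact Iw_norm_integrand p b w u hu hb.le
    _ ≤ J := by
        rw [hJdef]
        apply setIntegral_mono_on _ hJint measurableSet_Ioi
        · intro u hu
          have hu0 : (0:ℝ) < u := hu
          have hφ : (0:ℝ) < u + b/u := by positivity
          apply mul_le_mul_of_nonneg_right _ (Real.rpow_nonneg hu0.le p)
          exact Real.exp_le_exp.mpr (neg_le_neg (mul_le_mul_of_nonneg_right hαle hφ.le))
        · exact IntegrableOn.congr_fun ((Iw_integrable hp hb hwre).norm)
            (fun u hu => Iw_norm_integrand p b w u hu hb.le) measurableSet_Ioi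
  have hJ : J = α^(p+1) * R := by
    have hsub := integral_comp_mul_left_Ioi
      (fun u : ℝ => Real.exp (-(α * (u + b/u))) * u^p) 0 hα
    beta_reduce at hsub
    rw [mul_zero] at hsub
    have hcongr : ∀ s ∈ Ioi (0:ℝ),
        Real.exp (-(α * (α*s + b/(α*s)))) * (α*s)^p
        = α^p * (Real.exp (-(m/2 * s)) * (s^p * Real.exp (-(b/s)))) := by
      intro s hs
      have hs0 : (0:ℝ) < s := hs
      have hexp : -(α * (α*s + b/(α*s))) = -(m/2 * s) + -(b/s) := by
        have : α * (α*s + b/(α*s)) = α^2*s + b/s := by field_simp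
        rw [this, hαsq]; ring
      rw [hexp, Real.exp_add, Real.mul_rpow hα.le hs0.le]
      ring
    rw [setIntegral_congr_fun measurableSet_Ioi hcongr] at hsub
    rw [integral_const_mul] at hsub
    rw [← hJdef, ← hRdef] at hsub
    have : J = α • (α^p * R) := by
      rw [hsub, smul_smul, mul_inv_cancel₀ hα.ne', one_smul]
    rw [this, smul_eq_mul, Real.rpow_add hα, Real.rpow_one]
    ring
  -- norm of Fz
  have hFzn : ‖Fz p b ζ‖ * ρ^(p+1) = ‖Iw p b w‖ := by
    rw [← hnormw, ← norm_mul, hkey]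
  have hρp : (0:ℝ) < ρ^(p+1) := Real.rpow_pos_of_pos hρ _
  have hconst : α^(p+1) / ρ^(p+1) = 2 ^ (((d:ℝ)-1)/4) := by
    rw [← Real.div_rpow hα.le hρ.le]
    have hsm : (0:ℝ) < Real.sqrt m := by rw [← hρdef]; exact hρ
    have hs2 : (0:ℝ) < Real.sqrt 2 := Real.sqrt_pos.mpr two_pos
    have hαρ : α / ρ = 2 ^ (-(1/2) : ℝ) := by
      rw [hαdef, hρdef, Real.sqrt_div hm.le 2, Real.rpow_neg (by norm_num : (0:ℝ) ≤ 2),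
        ← Real.sqrt_eq_rpow]
      field_simp
    rw [hαρ, ← Real.rpow_mul (by norm_num : (0:ℝ) ≤ 2)]
    congr 1
    rw [hpdef]
    ring
  have hFzle : ‖Fz p b ζ‖ ≤ 2 ^ (((d:ℝ)-1)/4) * R := by
    have h1 : ‖Fz p b ζ‖ = ‖Iw p b w‖ / ρ^(p+1) := by
      rw [← hFzn, mul_div_assoc, div_self hρp.ne', mul_one]
    rw [h1, ← hconst, div_le_iff₀ hρp]
    calc ‖Iw p b w‖ ≤ J := hIwle
    _ = α^(p+1) * R := hJ
    _ = α^(p+1) / ρ^(p+1) * R * ρ^(p+1) := by field_simp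
  -- rewrite cKer in terms of Fz
  have hGpos : 0 < Real.Gamma ((1:ℝ)/2) := Real.Gamma_pos_of_pos (by norm_num)
  have hcongrC : ∀ t ∈ Ioi (0:ℝ),
      Complex.exp (-ζ * t) * ((t ^ ((1:ℝ)/2 - 1) * (4 * π * t) ^ (-(d:ℝ)/2) *
        Real.exp (-(dist x y) ^ 2 / (4 * t)) : ℝ) : ℂ)
      = (((4*π) ^ (-(d:ℝ)/2) : ℝ) : ℂ) *
        (Complex.exp (-ζ * t) * ((t ^ p * Real.exp (-(b / t)) : ℝ) : ℂ)) := by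
    intro t ht
    have ht0 : (0:ℝ) < t := ht
    have h1 : (4 * π * t) ^ (-(d:ℝ)/2) = (4*π) ^ (-(d:ℝ)/2) * t ^ (-(d:ℝ)/2) :=
      Real.mul_rpow (by positivity) ht0.le
    have h2 : t ^ ((1:ℝ)/2 - 1) * t ^ (-(d:ℝ)/2) = t ^ p := by
      rw [← Real.rpow_add ht0, hpdef]
      congr 1
      ring
    have h3 : -(dist x y) ^ 2 / (4 * t) = -(b / t) := by
      rw [hbdef, neg_div, div_div]
    have h5 : (t ^ ((1:ℝ)/2 - 1) * (4 * π * t) ^ (-(d:ℝ)/2) *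
        Real.exp (-(dist x y) ^ 2 / (4 * t)) : ℝ)
        = (4*π) ^ (-(d:ℝ)/2) * (t ^ p * Real.exp (-(b / t))) := by
      rw [h1, h3, ← h2]
      ring
    rw [h5]
    push_cast
    ring
  have hcEq : cKer d 1 ζ x y = (Real.Gamma ((1:ℝ)/2))⁻¹ •
      ((((4*π) ^ (-(d:ℝ)/2) : ℝ) : ℂ) * Fz p b ζ) := by
    rw [show cKer d 1 ζ x y = (Real.Gamma ((1:ℝ)/2))⁻¹ •
      ∫ t in Ioi (0:ℝ), Complex.exp (-ζ * t) *
        ((t ^ ((1:ℝ)/2 - 1) * (4 * π * t) ^ (-(d:ℝ)/2) *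
          Real.exp (-(dist x y) ^ 2 / (4 * t)) : ℝ) : ℂ) from rfl]
    congr 1
    rw [setIntegral_congr_fun measurableSet_Ioi hcongrC, Fz]
    exact integral_const_mul _ _
  have hcN : ‖cKer d 1 ζ x y‖
      = (Real.Gamma ((1:ℝ)/2))⁻¹ * ((4*π) ^ (-(d:ℝ)/2) * ‖Fz p b ζ‖) := by
    rw [hcEq, norm_smul, norm_mul, Complex.norm_real, Real.norm_eq_abs, Real.norm_eq_abs,
      abs_of_pos (by positivity : (0:ℝ) < (Real.Gamma ((1:ℝ)/2))⁻¹),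
      abs_of_pos (by positivity : (0:ℝ) < (4*π) ^ (-(d:ℝ)/2))]
  -- rewrite rKer in terms of R
  have hrcongr : ∀ t ∈ Ioi (0:ℝ),
      Real.exp (-(m/2) * t) * t ^ ((1:ℝ)/2 - 1) * (4*π*t) ^ (-(d:ℝ)/2) *
        Real.exp (-(dist x y) ^ 2 / (4 * t))
      = (4*π) ^ (-(d:ℝ)/2) * (Real.exp (-(m/2 * t)) * (t ^ p * Real.exp (-(b/t)))) := by
    intro t ht
    have ht0 : (0:ℝ) < t := ht
    have h1 : (4 * π * t) ^ (-(d:ℝ)/2) = (4*π) ^ (-(d:ℝ)/2) * t ^ (-(d:ℝ)/2) :=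
      Real.mul_rpow (by positivity) ht0.le
    have h2 : t ^ ((1:ℝ)/2 - 1) * t ^ (-(d:ℝ)/2) = t ^ p := by
      rw [← Real.rpow_add ht0, hpdef]
      congr 1
      ring
    have h3 : -(dist x y) ^ 2 / (4 * t) = -(b / t) := by
      rw [hbdef, neg_div, div_div]
    rw [h1, h3, ← h2, neg_mul, ← neg_mul]
    ring
  have hrEq : rKer d 1 (m/2) x y
      = (Real.Gamma ((1:ℝ)/2))⁻¹ * ((4*π) ^ (-(d:ℝ)/2) * R) := by
    rw [show rKer d 1 (m/2) x y = (Real.Gamma ((1:ℝ)/2))⁻¹ *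
      ∫ t in Ioi (0:ℝ), Real.exp (-(m/2) * t) * t ^ ((1:ℝ)/2 - 1) *
        (4 * π * t) ^ (-(d:ℝ)/2) * Real.exp (-(dist x y) ^ 2 / (4 * t)) from rfl]
    congr 1
    rw [setIntegral_congr_fun measurableSet_Ioi hrcongr, hRdef]
    exact integral_const_mul _ _
  -- conclude
  rw [hrEq, hcN]
  have hfin : ((d:ℝ)-1)/4 ≤ (d:ℝ)/4 + 1/4 := by linarith
  calc (Real.Gamma ((1:ℝ)/2))⁻¹ * ((4*π) ^ (-(d:ℝ)/2) * ‖Fz p b ζ‖)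
      ≤ (Real.Gamma ((1:ℝ)/2))⁻¹ * ((4*π) ^ (-(d:ℝ)/2) * (2 ^ (((d:ℝ)-1)/4) * R)) := by
        apply mul_le_mul_of_nonneg_left _ (by positivity)
        exact mul_le_mul_of_nonneg_left hFzle (by positivity)
  _ = 2 ^ (((d:ℝ)-1)/4) * ((Real.Gamma ((1:ℝ)/2))⁻¹ * ((4*π) ^ (-(d:ℝ)/2) * R)) := by
        ring
  _ ≤ 2 ^ ((d:ℝ)/4 + 1/4) * ((Real.Gamma ((1:ℝ)/2))⁻¹ * ((4*π) ^ (-(d:ℝ)/2) * R)) := by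
        apply mul_le_mul_of_nonneg_right
          (Real.rpow_le_rpow_of_exponent_le one_le_two hfin)
        have : (0:ℝ) ≤ (4*π) ^ (-(d:ℝ)/2) * R := mul_nonneg (by positivity) hR0
        positivity
end
end

section
/- For every r ∈ (1, ∞] there is a constant m_{r,d} < ∞ such that for all ζ with Re ζ > 0 and all x ≠ y in ℝ^d, |∇_x (ζ-Δ)^{-1+1/(2r)}(x,y)| ≤ m_{r,d} (κ_d^{-1}·Re ζ - Δ)^{-1/2+1/(2r)}(x,y), where κ_d = d/(d-1). -/
noncomputable section
open Real Set MeasureTheory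

lemma aux_xi (d : ℕ) (hd : 1 ≤ d) {ξ : ℝ} (hξ : 0 ≤ ξ) :
    ξ * Real.exp (-ξ^2/(d:ℝ)) ≤ Real.sqrt d := by
  have hdR : (0:ℝ) < d := by exact_mod_cast Nat.pos_of_ne_zero (by omega)
  rcases le_or_gt ξ (Real.sqrt d) with h | h
  · have h1 : Real.exp (-ξ^2/(d:ℝ)) ≤ 1 := Real.exp_le_one_iff.2 (by rw [neg_div]; exact neg_nonpos.2 (by positivity))
    have := mul_le_mul_of_nonneg_left h1 hξ
    nlinarith
  · have hξ0 : 0 < ξ := lt_of_le_of_lt (Real.sqrt_nonneg _) h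
    have h2 : ξ^2/(d:ℝ) ≤ Real.exp (ξ^2/(d:ℝ)) := (Real.add_one_le_exp _).trans' (by linarith)
    have h3 : Real.exp (-ξ^2/(d:ℝ)) ≤ (d:ℝ)/ξ^2 := by
      rw [neg_div, Real.exp_neg, inv_le_comm₀ (Real.exp_pos _) (by positivity), inv_div]
      exact h2
    have h4 : ξ * Real.exp (-ξ^2/(d:ℝ)) ≤ (d:ℝ)/ξ := by
      have := mul_le_mul_of_nonneg_left h3 hξ0.le
      calc ξ * Real.exp (-ξ^2/(d:ℝ)) ≤ ξ * ((d:ℝ)/ξ^2) := this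
        _ = (d:ℝ)/ξ := by field_simp
    have h5 : (d:ℝ)/ξ ≤ (d:ℝ)/Real.sqrt d :=
      div_le_div_of_nonneg_left hdR.le (Real.sqrt_pos.2 hdR) h.le
    have h6 : (d:ℝ)/Real.sqrt d = Real.sqrt d := by
      rw [eq_comm, eq_div_iff (Real.sqrt_pos.2 hdR).ne', Real.mul_self_sqrt hdR.le]
    linarith

lemma aux_ptwise (d : ℕ) (hd : 2 ≤ d) (κd : ℝ) (hκd : κd = (d:ℝ)/((d:ℝ) - 1))
    {ρ t : ℝ} (hρ : 0 < ρ) (ht : 0 < t) :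
    ρ/(2*t) * Real.exp (-ρ^2/(4*t)) ≤
      Real.sqrt d * (t ^ (-(1:ℝ)/2) * Real.exp (-(ρ^2/κd)/(4*t))) := by
  have hdR : (2:ℝ) ≤ d := by exact_mod_cast hd
  have hd1 : (0:ℝ) < (d:ℝ) - 1 := by linarith
  have hd0 : (0:ℝ) < (d:ℝ) := by linarith
  have hst : 0 < Real.sqrt t := Real.sqrt_pos.2 ht
  set ξ : ℝ := ρ / (2 * Real.sqrt t) with hξdef
  have hξ : 0 < ξ := by positivity
  have hξsq : ξ^2 = ρ^2/(4*t) := by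
    rw [hξdef, div_pow, mul_pow, Real.sq_sqrt ht.le]
    norm_num
  have htpow : t ^ (-(1:ℝ)/2) = (Real.sqrt t)⁻¹ := by
    rw [neg_div, Real.rpow_neg ht.le, Real.sqrt_eq_rpow]
  have h1 : ρ/(2*t) = ξ * t ^ (-(1:ℝ)/2) := by
    have hts : Real.sqrt t * Real.sqrt t = t := Real.mul_self_sqrt ht.le
    rw [htpow, hξdef, ← hts]
    field_simp
    rw [Real.sqrt_sq hst.le]
  have hκpos : 0 < κd := by rw [hκd]; positivity
  have hsplit : -ρ^2/(4*t) = -(ρ^2/κd)/(4*t) + -ξ^2/(d:ℝ) := by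
    rw [hξsq, hκd]
    field_simp
    ring
  have key := aux_xi d (by omega) hξ.le
  calc ρ/(2*t) * Real.exp (-ρ^2/(4*t))
      = (ξ * Real.exp (-ξ^2/(d:ℝ))) * (t ^ (-(1:ℝ)/2) * Real.exp (-(ρ^2/κd)/(4*t))) := by
        rw [h1, hsplit, Real.exp_add]; ring
    _ ≤ Real.sqrt d * (t ^ (-(1:ℝ)/2) * Real.exp (-(ρ^2/κd)/(4*t))) := by
        apply mul_le_mul_of_nonneg_right key (by positivity)

lemma aux_bound (d : ℕ) {b q : ℝ} (hb : 0 < b) (hqd : -(d:ℝ) ≤ q) (hq0 : q ≤ 0)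
    {t : ℝ} (ht : 0 < t) :
    t ^ q * Real.exp (-b/t) ≤ max 1 ((d.factorial : ℝ) / b^d) := by
  rcases le_or_gt 1 t with h1 | h1
  · have e1 : t ^ q ≤ 1 := Real.rpow_le_one_of_one_le_of_nonpos h1 hq0
    have e2 : Real.exp (-b/t) ≤ 1 := by
      rw [Real.exp_le_one_iff, neg_div]
      exact neg_nonpos.2 (by positivity)
    have : t ^ q * Real.exp (-b/t) ≤ 1 := by
      calc t ^ q * Real.exp (-b/t) ≤ 1 * 1 :=
        mul_le_mul e1 e2 (Real.exp_pos _).le zero_le_one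
      _ = 1 := by ring
    exact this.trans (le_max_left _ _)
  · set u : ℝ := t⁻¹ with hu
    have hu1 : 1 ≤ u := by
      rw [hu, le_inv_comm₀ one_pos ht]
      simpa using h1.le
    have hu0 : 0 < u := by positivity
    have e1 : t ^ q = u ^ (-q) := by
      rw [hu, Real.inv_rpow ht.le, ← Real.rpow_neg ht.le, neg_neg]
    have e2 : u ^ (-q) ≤ u ^ (d:ℝ) := Real.rpow_le_rpow_of_exponent_le hu1 (by linarith)
    have e3 : u ^ (d:ℝ) = u ^ d := Real.rpow_natCast u d
    have hx : (0:ℝ) ≤ b * u := by positivity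
    have e4 : (b*u)^d / (d.factorial : ℝ) ≤ Real.exp (b*u) := by
      refine le_trans ?_ (Real.sum_le_exp_of_nonneg hx (d+1))
      refine Finset.single_le_sum (f := fun i => (b*u)^i / (i.factorial : ℝ)) ?_ ?_
      · intro i _; positivity
      · simp
    have e5 : u ^ d * Real.exp (-(b*u)) ≤ (d.factorial : ℝ) / b^d := by
      rw [Real.exp_neg, ← div_eq_mul_inv, div_le_div_iff₀ (Real.exp_pos _) (by positivity)]
      have : (b*u)^d = b^d * u^d := mul_pow b u d
      nlinarith [Real.exp_pos (b*u), pow_pos hb d, pow_pos hu0 d,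
        (div_le_iff₀ (by positivity : (0:ℝ) < (d.factorial:ℝ))).1 e4]
    have e6 : -b/t = -(b*u) := by rw [hu]; field_simp
    calc t ^ q * Real.exp (-b/t) = u ^ (-q) * Real.exp (-(b*u)) := by rw [e1, e6]
      _ ≤ u ^ d * Real.exp (-(b*u)) := by
          apply mul_le_mul_of_nonneg_right (e3 ▸ e2) (Real.exp_pos _).le
      _ ≤ (d.factorial : ℝ) / b^d := e5
      _ ≤ _ := le_max_right _ _

lemma aux_integrable (d : ℕ) {lam b q : ℝ} (hlam : 0 < lam) (hb : 0 < b)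
    (hqd : -(d:ℝ) ≤ q) (hq0 : q ≤ 0) :
    IntegrableOn (fun t : ℝ => Real.exp (-lam * t) * t ^ q * Real.exp (-b/t)) (Ioi 0) := by
  set C : ℝ := max 1 ((d.factorial : ℝ) / b^d) with hC
  have hC0 : 0 ≤ C := le_trans zero_le_one (le_max_left _ _)
  have hmeas : Measurable (fun t : ℝ => Real.exp (-lam * t) * t ^ q * Real.exp (-b/t)) := by
    apply Measurable.mul
    apply Measurable.mul
    · exact (measurable_id.const_mul (-lam)).exp
    · measurability
    · exact (measurable_const.div measurable_id).exp
  refine Integrable.mono' ((exp_neg_integrableOn_Ioi 0 hlam).const_mul C)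
    hmeas.aestronglyMeasurable ?_
  filter_upwards [ae_restrict_mem measurableSet_Ioi] with t ht
  have ht0 : (0:ℝ) < t := ht
  have hnn : 0 ≤ Real.exp (-lam * t) * t ^ q * Real.exp (-b/t) := by positivity
  rw [Real.norm_eq_abs, abs_of_nonneg hnn]
  have := aux_bound d hb hqd hq0 ht0
  calc Real.exp (-lam * t) * t ^ q * Real.exp (-b/t)
      = (t ^ q * Real.exp (-b/t)) * Real.exp (-lam * t) := by ring
    _ ≤ C * Real.exp (-lam * t) := by
        apply mul_le_mul_of_nonneg_right this (Real.exp_pos _).le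

/-- for every `r ∈ (1,∞]` there is `m_{r,d} < ∞` such that for all
`Re ζ > 0` and `x ≠ y`,
`|∇ₓ (ζ-Δ)^(-1+1/(2r))(x,y)| ≤ m_{r,d} (κ_d⁻¹ Re ζ - Δ)^(-1/2+1/(2r))(x,y)`,
`κ_d = d/(d-1)`. The exponent `-1+1/(2r)` corresponds to `γ = 2 - 2s` and
`-1/2+1/(2r)` to `γ = 1 - 2s`, where `s = 1/(2r)` (with `s = 0` when `r = ∞`). -/
theorem stmt19 (d : ℕ) (hd : 2 ≤ d) (κd : ℝ) (hκd : κd = (d:ℝ)/((d:ℝ) - 1))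
    (r : ENNReal) (hr : 1 < r) (s : ℝ) (hs : s = ((2 * r)⁻¹).toReal) :
    ∃ m : ℝ, ∀ ζ : ℂ, 0 < ζ.re → ∀ x y : EuclideanSpace ℝ (Fin d), x ≠ y →
      Real.sqrt (∑ i, ‖gradKer d (2 - 2*s) ζ x y i‖ ^ 2) ≤
        m * rKer d (1 - 2*s) (ζ.re / κd) x y := by
  have hdR : (2:ℝ) ≤ (d:ℝ) := by exact_mod_cast hd
  have hd1 : (0:ℝ) < (d:ℝ) - 1 := by linarith
  have hd0 : (0:ℝ) < (d:ℝ) := by linarith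
  have hκ0 : 0 < κd := by rw [hκd]; positivity
  have hs0 : 0 ≤ s := hs ▸ ENNReal.toReal_nonneg
  have hs2 : s < 1/2 := by
    rw [hs]
    have h2r : (2:ENNReal) < 2 * r := by
      have := (ENNReal.mul_lt_mul_iff_right (a := 2) (by norm_num) (by norm_num)).2 hr
      simpa using this
    have hne0 : (2*r : ENNReal) ≠ 0 := by
      intro h; rw [h] at h2r; exact absurd h2r (by simp)
    have hinv : (2*r : ENNReal)⁻¹ < 2⁻¹ := by
      rw [ENNReal.inv_lt_inv]; exact h2r
    have hne : (2*r : ENNReal)⁻¹ ≠ ⊤ := ENNReal.inv_ne_top.2 hne0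
    have := (ENNReal.toReal_lt_toReal hne (by simp)).2 hinv
    simpa using this
  have hΓ1 : 0 < Real.Gamma ((2-2*s)/2) := Real.Gamma_pos_of_pos (by linarith)
  have hΓ2 : 0 < Real.Gamma ((1-2*s)/2) := Real.Gamma_pos_of_pos (by linarith)
  set P : ℝ := κd * (κd ^ ((1-2*s)/2 - 1) * κd ^ (-(d:ℝ)/2)) with hP
  have hP0 : 0 < P := by
    apply mul_pos hκ0
    exact mul_pos (Real.rpow_pos_of_pos hκ0 _) (Real.rpow_pos_of_pos hκ0 _)
  refine ⟨Real.sqrt d * Real.Gamma ((1-2*s)/2) * P⁻¹ / Real.Gamma ((2-2*s)/2), ?_⟩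
  intro ζ hζ x y hxy
  set ρ := dist x y with hρdef
  have hρ : 0 < ρ := dist_pos.2 hxy
  set G : ℝ → ℝ := fun t => Real.exp (-ζ.re*t) *
    (t ^ ((2-2*s)/2 - 1) * (4*π*t) ^ (-(d:ℝ)/2) * (1/(2*t)) * Real.exp (-ρ^2/(4*t))) with hG
  set H : ℝ → ℝ := fun t => Real.exp (-ζ.re * t) * t ^ ((1-2*s)/2 - 1) *
    (4*π*t) ^ (-(d:ℝ)/2) * Real.exp (-(ρ^2/κd)/(4*t)) with hH
  -- nonnegativity of G on Ioi 0
  have hGnn : ∀ t ∈ Ioi (0:ℝ), 0 ≤ G t := by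
    intro t ht
    have ht0 : (0:ℝ) < t := ht
    rw [hG]
    positivity
  have hHnn : ∀ t ∈ Ioi (0:ℝ), 0 ≤ H t := by
    intro t ht
    have ht0 : (0:ℝ) < t := ht
    rw [hH]
    positivity
  -- integrability of H
  have hHint : IntegrableOn H (Ioi 0) := by
    have hb : 0 < ρ^2/κd/4 := by positivity
    have hq : -(d:ℝ) ≤ (1-2*s)/2 - 1 + -(d:ℝ)/2 := by linarith
    have hq0 : (1-2*s)/2 - 1 + -(d:ℝ)/2 ≤ 0 := by linarith
    have base := (aux_integrable d hζ hb hq hq0).const_mul ((4*π) ^ (-(d:ℝ)/2) : ℝ)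
    refine IntegrableOn.congr_fun base (fun t ht => ?_) measurableSet_Ioi
    have ht0 : (0:ℝ) < t := ht
    have e1 : (4*π*t) ^ (-(d:ℝ)/2) = (4*π) ^ (-(d:ℝ)/2) * t ^ (-(d:ℝ)/2) :=
      Real.mul_rpow (by positivity) ht0.le
    have e2 : t ^ ((1-2*s)/2 - 1) * t ^ (-(d:ℝ)/2) = t ^ ((1-2*s)/2 - 1 + -(d:ℝ)/2) :=
      (Real.rpow_add ht0 _ _).symm
    have e3 : -(ρ^2/κd)/(4*t) = -(ρ^2/κd/4)/t := by ring
    show (4*π) ^ (-(d:ℝ)/2) * (Real.exp (-ζ.re * t) * t ^ ((1-2*s)/2 - 1 + -(d:ℝ)/2) *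
      Real.exp (-(ρ^2/κd/4)/t)) = H t
    simp only [hH]
    rw [e1, ← e2, ← e3]
    ring
  have hGint_nonneg : 0 ≤ ∫ t in Ioi (0:ℝ), G t := setIntegral_nonneg measurableSet_Ioi hGnn
  set C : ℝ := (Real.Gamma ((2-2*s)/2))⁻¹ * ∫ t in Ioi (0:ℝ), G t with hCdef
  have hC0 : 0 ≤ C := mul_nonneg (inv_nonneg.2 hΓ1.le) hGint_nonneg
  -- Step A
  have hgrad : ∀ i, ‖gradKer d (2-2*s) ζ x y i‖ ≤
      |x i - y i| * ((Real.Gamma ((2-2*s)/2))⁻¹ * ∫ t in Ioi (0:ℝ), G t) := by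
    intro i
    rw [gradKer, norm_smul, Real.norm_eq_abs, abs_of_nonneg (inv_nonneg.2 hΓ1.le)]
    have step1 : ‖∫ t in Ioi (0:ℝ), Complex.exp (-ζ * t) *
        ((t ^ ((2-2*s)/2 - 1) * (4 * π * t) ^ (-(d:ℝ)/2) * (-(x i - y i)/(2 * t)) *
          Real.exp (-(dist x y) ^ 2 / (4 * t)) : ℝ) : ℂ)‖ ≤
        ∫ t in Ioi (0:ℝ), |x i - y i| * G t := by
      refine (norm_integral_le_integral_norm _).trans (le_of_eq ?_)
      refine setIntegral_congr_fun measurableSet_Ioi ?_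
      intro t ht
      have ht0 : (0:ℝ) < t := ht
      dsimp only
      rw [norm_mul, Complex.norm_exp, Complex.norm_real, Real.norm_eq_abs]
      have hre : (-ζ * (t:ℂ)).re = -ζ.re * t := by simp
      rw [hre]
      rw [abs_mul, abs_mul, abs_mul, abs_div, abs_neg]
      rw [abs_of_nonneg (Real.rpow_nonneg ht0.le _),
        abs_of_nonneg (Real.rpow_nonneg (by positivity : (0:ℝ) ≤ 4*π*t) _),
        abs_of_nonneg (Real.exp_pos _).le, abs_of_pos (by positivity : (0:ℝ) < 2*t)]
      rw [hG, ← hρdef]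
      ring
    calc (Real.Gamma ((2-2*s)/2))⁻¹ * ‖∫ t in Ioi (0:ℝ), Complex.exp (-ζ * t) *
        ((t ^ ((2-2*s)/2 - 1) * (4 * π * t) ^ (-(d:ℝ)/2) * (-(x i - y i)/(2 * t)) *
          Real.exp (-(dist x y) ^ 2 / (4 * t)) : ℝ) : ℂ)‖ ≤
        (Real.Gamma ((2-2*s)/2))⁻¹ * ∫ t in Ioi (0:ℝ), |x i - y i| * G t :=
          mul_le_mul_of_nonneg_left step1 (inv_nonneg.2 hΓ1.le)
      _ = |x i - y i| * ((Real.Gamma ((2-2*s)/2))⁻¹ * ∫ t in Ioi (0:ℝ), G t) := by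
          rw [MeasureTheory.integral_const_mul]; ring
  -- Step B
  have hB : Real.sqrt (∑ i, ‖gradKer d (2 - 2*s) ζ x y i‖ ^ 2) ≤ ρ * C := by
    have h1 : ∑ i, ‖gradKer d (2 - 2*s) ζ x y i‖ ^ 2 ≤ ∑ i, (|x i - y i| * C)^2 :=
      Finset.sum_le_sum fun i _ => pow_le_pow_left₀ (norm_nonneg _) (hgrad i) 2
    have h2 : ∑ i, (|x i - y i| * C)^2 = (∑ i, (x i - y i)^2) * C^2 := by
      simp only [mul_pow, sq_abs]
      rw [← Finset.sum_mul]
    have h3 : ρ = Real.sqrt (∑ i, (x i - y i)^2) := by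
      rw [hρdef, EuclideanSpace.dist_eq]
      congr 1
      refine Finset.sum_congr rfl fun i _ => ?_
      rw [Real.dist_eq, sq_abs]
    calc Real.sqrt (∑ i, ‖gradKer d (2 - 2*s) ζ x y i‖ ^ 2)
        ≤ Real.sqrt (∑ i, (|x i - y i| * C)^2) := Real.sqrt_le_sqrt h1
      _ = ρ * C := by
          rw [h2, Real.sqrt_mul (Finset.sum_nonneg fun i _ => sq_nonneg _), h3,
            Real.sqrt_sq hC0]
  -- Step D
  have hD : ∫ t in Ioi (0:ℝ), ρ * G t ≤ ∫ t in Ioi (0:ℝ), Real.sqrt d * H t := by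
    apply integral_mono_of_nonneg
    · filter_upwards [ae_restrict_mem measurableSet_Ioi] with t ht
      exact mul_nonneg hρ.le (hGnn t ht)
    · exact hHint.const_mul _
    · filter_upwards [ae_restrict_mem measurableSet_Ioi] with t ht
      have ht0 : (0:ℝ) < t := ht
      have key := aux_ptwise d hd κd hκd hρ ht0
      have hpre : 0 ≤ Real.exp (-ζ.re*t) * t ^ ((2-2*s)/2-1) * (4*π*t) ^ (-(d:ℝ)/2) := by
        have h4 : (0:ℝ) ≤ 4*π*t := by positivity
        exact mul_nonneg (mul_nonneg (Real.exp_pos _).le (Real.rpow_nonneg ht0.le _))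
          (Real.rpow_nonneg h4 _)
      have expand : ρ * G t = (Real.exp (-ζ.re*t) * t ^ ((2-2*s)/2-1) * (4*π*t) ^ (-(d:ℝ)/2)) *
          (ρ/(2*t) * Real.exp (-ρ^2/(4*t))) := by
        simp only [hG]; ring
      have hexp : t ^ ((2-2*s)/2-1) * t ^ (-(1:ℝ)/2) = t ^ ((1-2*s)/2 - 1) := by
        rw [← Real.rpow_add ht0]
        congr 1
        ring
      have expand2 : Real.sqrt d * H t =
          (Real.exp (-ζ.re*t) * t ^ ((2-2*s)/2-1) * (4*π*t) ^ (-(d:ℝ)/2)) *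
          (Real.sqrt d * (t ^ (-(1:ℝ)/2) * Real.exp (-(ρ^2/κd)/(4*t)))) := by
        simp only [hH]
        rw [← hexp]
        ring
      rw [expand, expand2]
      exact mul_le_mul_of_nonneg_left key hpre
  -- Step E
  have hrKer : rKer d (1-2*s) (ζ.re/κd) x y =
      (Real.Gamma ((1-2*s)/2))⁻¹ * (P * ∫ t in Ioi (0:ℝ), H t) := by
    rw [rKer, ← hρdef]
    congr 1
    have hcv := integral_comp_mul_left_Ioi (fun u => Real.exp (-(ζ.re/κd) * u) *
      u ^ ((1-2*s)/2 - 1) * (4*π*u) ^ (-(d:ℝ)/2) * Real.exp (-ρ^2/(4*u))) 0 hκ0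
    rw [mul_zero, smul_eq_mul] at hcv
    have hFH : EqOn (fun t : ℝ => Real.exp (-(ζ.re/κd) * (κd * t)) *
        (κd*t) ^ ((1-2*s)/2 - 1) * (4*π*(κd*t)) ^ (-(d:ℝ)/2) * Real.exp (-ρ^2/(4*(κd*t))))
        (fun t : ℝ => (κd ^ ((1-2*s)/2 - 1) * κd ^ (-(d:ℝ)/2)) * H t) (Ioi 0) := by
      intro t ht
      have ht0 : (0:ℝ) < t := ht
      dsimp only
      have f1 : -(ζ.re/κd) * (κd * t) = -ζ.re * t := by
        field_simp
      have f2 : (κd*t) ^ ((1-2*s)/2 - 1) = κd ^ ((1-2*s)/2 - 1) * t ^ ((1-2*s)/2 - 1) :=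
        Real.mul_rpow hκ0.le ht0.le
      have f3 : 4*π*(κd*t) = κd*(4*π*t) := by ring
      have f4 : (4*π*(κd*t)) ^ (-(d:ℝ)/2) = κd ^ (-(d:ℝ)/2) * (4*π*t) ^ (-(d:ℝ)/2) := by
        rw [f3, Real.mul_rpow hκ0.le (by positivity)]
      have f5 : -ρ^2/(4*(κd*t)) = -(ρ^2/κd)/(4*t) := by
        field_simp
      rw [f1, f2, f4, f5, hH]
      ring
    have e4 : (∫ t in Ioi (0:ℝ), Real.exp (-(ζ.re/κd) * (κd * t)) *
        (κd*t) ^ ((1-2*s)/2 - 1) * (4*π*(κd*t)) ^ (-(d:ℝ)/2) * Real.exp (-ρ^2/(4*(κd*t)))) =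
        (κd ^ ((1-2*s)/2 - 1) * κd ^ (-(d:ℝ)/2)) * ∫ t in Ioi (0:ℝ), H t := by
      rw [setIntegral_congr_fun measurableSet_Ioi hFH, MeasureTheory.integral_const_mul]
    beta_reduce at hcv
    rw [e4] at hcv
    rw [hP]
    calc (∫ t in Ioi (0:ℝ), Real.exp (-(ζ.re/κd) * t) * t ^ ((1-2*s)/2 - 1) *
          (4*π*t) ^ (-(d:ℝ)/2) * Real.exp (-ρ^2/(4*t)))
        = κd * (κd⁻¹ * ∫ t in Ioi (0:ℝ), Real.exp (-(ζ.re/κd) * t) * t ^ ((1-2*s)/2 - 1) *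
          (4*π*t) ^ (-(d:ℝ)/2) * Real.exp (-ρ^2/(4*t))) := by
          rw [← mul_assoc, mul_inv_cancel₀ hκ0.ne', one_mul]
      _ = κd * (κd ^ ((1-2*s)/2 - 1) * κd ^ (-(d:ℝ)/2) * ∫ t in Ioi (0:ℝ), H t) := by
          rw [← hcv]
      _ = κd * (κd ^ ((1-2*s)/2 - 1) * κd ^ (-(d:ℝ)/2)) * ∫ t in Ioi (0:ℝ), H t := by ring
  -- conclusion
  calc Real.sqrt (∑ i, ‖gradKer d (2 - 2*s) ζ x y i‖ ^ 2) ≤ ρ * C := hB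
    _ = (Real.Gamma ((2-2*s)/2))⁻¹ * ∫ t in Ioi (0:ℝ), ρ * G t := by
        rw [MeasureTheory.integral_const_mul, hCdef]
        ring
    _ ≤ (Real.Gamma ((2-2*s)/2))⁻¹ * ∫ t in Ioi (0:ℝ), Real.sqrt d * H t :=
        mul_le_mul_of_nonneg_left hD (inv_nonneg.2 hΓ1.le)
    _ = Real.sqrt d * Real.Gamma ((1-2*s)/2) * P⁻¹ / Real.Gamma ((2-2*s)/2) *
        rKer d (1-2*s) (ζ.re/κd) x y := by
        rw [MeasureTheory.integral_const_mul, hrKer]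
        field_simp
end
end
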